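/- Let π: S⁵ → ℂP² be the Hopf map and let q: ℂP² → ℂP²/ℂP¹ be the quotient map collapsing the standardly embedded ℂP¹ (the set of complex lines contained in the coordinate plane ℂ² × {0} ⊂ ℂ³) to a single point. Then the composite q ∘ π: S⁵ → ℂP²/ℂP¹ is null-homotopic, i.e., homotopic to a constant map. -/

import Mathlib

noncomputable section

/-- Two nonzero vectors of `ℂ³` span the same complex line. -/
def projRel (v w : {v : EuclideanSpace ℂ (Fin 3) // v ≠ 0}) : Prop :=
  ∃ c : ℂ, c ≠ 0 ∧ (w : EuclideanSpace ℂ (Fin 3)) = c • (v : EuclideanSpace ℂ (Fin 3))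

/-- The complex projective plane `ℂP²`: the projectivization of `ℂ³`, i.e. the space of complex
lines through the origin in `ℂ³`, with the quotient topology. -/
def CP2 : Type := Quot projRel

instance : TopologicalSpace CP2 :=
  inferInstanceAs (TopologicalSpace (Quot projRel))

theorem sphere_ne_zero (x : Metric.sphere (0 : EuclideanSpace ℂ (Fin 3)) 1) :
    (x : EuclideanSpace ℂ (Fin 3)) ≠ 0 := by
  intro h
  have hx := x.2
  rw [mem_sphere_zero_iff_norm, h, norm_zero] at hx
  exact zero_ne_one hx

/-- The Hopf map `S⁵ → ℂP²`: the restriction to the unit sphere of `ℂ³` of the canonical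
quotient map onto the projectivization of `ℂ³`. -/
def hopf : C(Metric.sphere (0 : EuclideanSpace ℂ (Fin 3)) 1, CP2) :=
  ⟨fun x => Quot.mk projRel ⟨x, sphere_ne_zero x⟩,
    continuous_quot_mk.comp (Continuous.subtype_mk continuous_subtype_val _)⟩

/-- The standardly embedded `ℂP¹ ⊂ ℂP²`: the set of complex lines contained in the coordinate
plane `ℂ² × {0} ⊂ ℂ³`. -/
def CP1set : Set CP2 :=
  {z | ∃ v : {v : EuclideanSpace ℂ (Fin 3) // v ≠ 0},
    (v : EuclideanSpace ℂ (Fin 3)) 2 = 0 ∧ Quot.mk projRel v = z}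

/-- The relation collapsing `ℂP¹` to a point. -/
def collapseRel (a b : CP2) : Prop := a ∈ CP1set ∧ b ∈ CP1set

/-- The quotient `ℂP²/ℂP¹`, obtained by identifying `ℂP¹ ⊂ ℂP²` to a single point. -/
def CP2modCP1 : Type := Quot collapseRel

instance : TopologicalSpace CP2modCP1 :=
  inferInstanceAs (TopologicalSpace (Quot collapseRel))

/-- The quotient map `q : ℂP² → ℂP²/ℂP¹`. -/
def collapseMap : C(CP2, CP2modCP1) :=
  ⟨Quot.mk collapseRel, continuous_quot_mk⟩

-- scratch area
open ComplexConjugate Metric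

abbrev E3 := EuclideanSpace ℂ (Fin 3)

def Q (v : {v : E3 // v ≠ 0}) : CP2modCP1 := Quot.mk collapseRel (Quot.mk projRel v)

lemma continuous_Q : Continuous Q := continuous_quot_mk.comp continuous_quot_mk

lemma Q_smul (v : {v : E3 // v ≠ 0}) (c : ℂ) (hc : c ≠ 0) (w : {v : E3 // v ≠ 0})
    (hw : (w : E3) = c • (v : E3)) : Q w = Q v :=
  (congrArg (Quot.mk collapseRel) (Quot.sound ⟨c, hc, hw⟩)).symm

def mfun (x : E3) (t : ℝ) : ℝ := (1 - t) ^ 2 * ‖x 2‖ ^ 2 + t ^ 2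

def Vmap (x : E3) (t : ℝ) : E3 :=
  WithLp.toLp 2 ![((1 - t : ℝ) : ℂ) * (((1 - t : ℝ) : ℂ) * conj (x 2) * x 0 + (t : ℂ) * conj (x 1)),
    ((1 - t : ℝ) : ℂ) * (((1 - t : ℝ) : ℂ) * conj (x 2) * x 1 - (t : ℂ) * conj (x 0)),
    ((mfun x t : ℝ) : ℂ)]

lemma Vmap_apply2 (x : E3) (t : ℝ) : Vmap x t 2 = ((mfun x t : ℝ) : ℂ) := rfl

example (x : E3) (t : ℝ) : Vmap x t 0 = ((1 - t : ℝ) : ℂ) * (((1 - t : ℝ) : ℂ) * conj (x 2) * x 0 + (t : ℂ) * conj (x 1)) := rfl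
example (x : E3) (t : ℝ) : Vmap x t 1 = ((1 - t : ℝ) : ℂ) * (((1 - t : ℝ) : ℂ) * conj (x 2) * x 1 - (t : ℂ) * conj (x 0)) := rfl

lemma continuous_Vmap : Continuous fun p : E3 × ℝ => Vmap p.1 p.2 := by
  have hc : Continuous fun p : E3 × ℝ => ((1 - p.2 : ℝ) : ℂ) :=
    Complex.continuous_ofReal.comp (continuous_const.sub continuous_snd)
  have ht : Continuous fun p : E3 × ℝ => ((p.2 : ℝ) : ℂ) :=
    Complex.continuous_ofReal.comp continuous_snd
  have hx : ∀ i : Fin 3, Continuous fun p : E3 × ℝ => p.1 i := fun i =>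
    (PiLp.continuous_apply (p := 2) (β := fun _ : Fin 3 => ℂ) i).comp continuous_fst
  have hconj : ∀ i : Fin 3, Continuous fun p : E3 × ℝ => conj (p.1 i) := fun i =>
    Complex.continuous_conj.comp (hx i)
  have h0 : Continuous fun p : E3 × ℝ => Vmap p.1 p.2 0 := by
    simp only [Vmap, Matrix.cons_val_zero, mfun]
    exact hc.mul ((((hc.mul (hconj 2)).mul (hx 0))).add (ht.mul (hconj 1)))
  have h1 : Continuous fun p : E3 × ℝ => Vmap p.1 p.2 1 := by
    simp only [Vmap, Matrix.cons_val_one, Matrix.head_cons, mfun]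
    exact hc.mul ((((hc.mul (hconj 2)).mul (hx 1))).sub (ht.mul (hconj 0)))
  have h2 : Continuous fun p : E3 × ℝ => Vmap p.1 p.2 2 := by
    simp only [Vmap_apply2, mfun]
    exact Complex.continuous_ofReal.comp <| ((continuous_const.sub continuous_snd).pow 2 |>.mul
      (((continuous_norm.comp (hx 2)).pow 2))).add (continuous_snd.pow 2)
  refine (PiLp.continuous_toLp (p := 2) (β := fun _ : Fin 3 => ℂ)).comp
    (f := fun p : E3 × ℝ => (Vmap p.1 p.2).ofLp) ?_
  apply continuous_pi
  intro i
  fin_cases i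
  · exact h0
  · exact h1
  · exact h2

lemma mfun_nonneg (x : E3) (t : ℝ) : 0 ≤ mfun x t := by unfold mfun; positivity

lemma mfun_pos (x : E3) (t : ℝ) (h : ¬(t = 0 ∧ x 2 = 0)) : 0 < mfun x t := by
  rcases eq_or_ne t 0 with ht | ht
  · have hx2 : x 2 ≠ 0 := fun hx => h ⟨ht, hx⟩
    have hn : 0 < ‖x 2‖ := norm_pos_iff.mpr hx2
    have : 0 < ‖x 2‖ ^ 2 := by positivity
    unfold mfun
    nlinarith [sq_nonneg t]
  · have : 0 < t ^ 2 := (sq_nonneg t).lt_of_ne (Ne.symm (pow_ne_zero 2 ht))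
    unfold mfun
    nlinarith [mul_nonneg (sq_nonneg (1 - t)) (sq_nonneg ‖x 2‖)]

lemma Vmap_ne_zero (x : E3) (t : ℝ) (h : ¬(t = 0 ∧ x 2 = 0)) : Vmap x t ≠ 0 := by
  intro h0
  have h2 : Vmap x t 2 = 0 := congrArg (fun v : E3 => v 2) h0
  rw [Vmap_apply2] at h2
  exact absurd (Complex.ofReal_eq_zero.mp h2) (ne_of_gt (mfun_pos x t h))

lemma normsq_V01 (x : E3) (t : ℝ) :
    ‖Vmap x t 0‖ ^ 2 + ‖Vmap x t 1‖ ^ 2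
      = (1 - t) ^ 2 * mfun x t * (‖x 0‖ ^ 2 + ‖x 1‖ ^ 2) := by
  have key : Vmap x t 0 * conj (Vmap x t 0) + Vmap x t 1 * conj (Vmap x t 1)
      = ((1 - t : ℝ) : ℂ) ^ 2 * (((1 - t : ℝ) : ℂ) ^ 2 * (x 2 * conj (x 2)) + (t : ℂ) ^ 2)
        * (x 0 * conj (x 0) + x 1 * conj (x 1)) := by
    show (((1 - t : ℝ) : ℂ) * (((1 - t : ℝ) : ℂ) * conj (x 2) * x 0 + (t : ℂ) * conj (x 1)))
        * conj (((1 - t : ℝ) : ℂ) * (((1 - t : ℝ) : ℂ) * conj (x 2) * x 0 + (t : ℂ) * conj (x 1)))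
        + (((1 - t : ℝ) : ℂ) * (((1 - t : ℝ) : ℂ) * conj (x 2) * x 1 - (t : ℂ) * conj (x 0)))
        * conj (((1 - t : ℝ) : ℂ) * (((1 - t : ℝ) : ℂ) * conj (x 2) * x 1 - (t : ℂ) * conj (x 0)))
        = _
    simp only [map_mul, map_add, map_sub, Complex.conj_conj, Complex.conj_ofReal]
    ring
  simp only [Complex.mul_conj'] at key
  have key2 : ((‖Vmap x t 0‖ ^ 2 + ‖Vmap x t 1‖ ^ 2 : ℝ) : ℂ)
      = (((1 - t) ^ 2 * mfun x t * (‖x 0‖ ^ 2 + ‖x 1‖ ^ 2) : ℝ) : ℂ) := by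
    push_cast
    rw [key]
    unfold mfun
    push_cast
    ring
  exact_mod_cast key2

lemma norm_Vmap_sq (x : E3) (t : ℝ) :
    ‖Vmap x t‖ ^ 2 = (1 - t) ^ 2 * mfun x t * (‖x 0‖ ^ 2 + ‖x 1‖ ^ 2) + mfun x t ^ 2 := by
  have h := EuclideanSpace.norm_eq (Vmap x t)
  rw [h, Real.sq_sqrt (by positivity)]
  rw [Fin.sum_univ_three, normsq_V01]
  have : ‖Vmap x t 2‖ = mfun x t := by
    rw [Vmap_apply2, Complex.norm_real, Real.norm_eq_abs, abs_of_nonneg (mfun_nonneg x t)]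
  rw [this]

lemma mem_CP1set (v : {v : E3 // v ≠ 0}) (h : (v : E3) 2 = 0) :
    Quot.mk projRel v ∈ CP1set := ⟨v, h, rfl⟩

lemma e0_ne_zero : (WithLp.toLp 2 ![1, 0, 0] : E3) ≠ 0 := by
  intro h
  have := congrArg (fun v : E3 => v 0) h
  simp at this

def basept : CP2modCP1 := Q ⟨WithLp.toLp 2 ![1, 0, 0], e0_ne_zero⟩

lemma Q_eq_basept (v : {v : E3 // v ≠ 0}) (h : (v : E3) 2 = 0) : Q v = basept :=
  Quot.sound ⟨mem_CP1set v h, mem_CP1set _ rfl⟩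

lemma e2_ne_zero : (WithLp.toLp 2 ![0, 0, 1] : E3) ≠ 0 := by
  intro h
  have := congrArg (fun v : E3 => v 2) h
  simp at this

def nullpt : CP2modCP1 := Q ⟨WithLp.toLp 2 ![0, 0, 1], e2_ne_zero⟩

lemma Vmap_zero_eq (x : E3) : Vmap x 0 = conj (x 2) • x := by
  ext i
  fin_cases i
  · show ((1 - 0 : ℝ) : ℂ) * (((1 - 0 : ℝ) : ℂ) * conj (x 2) * x 0 + ((0 : ℝ) : ℂ) * conj (x 1))
      = conj (x 2) * x 0
    push_cast; ring
  · show ((1 - 0 : ℝ) : ℂ) * (((1 - 0 : ℝ) : ℂ) * conj (x 2) * x 1 - ((0 : ℝ) : ℂ) * conj (x 0))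
      = conj (x 2) * x 1
    push_cast; ring
  · show ((mfun x 0 : ℝ) : ℂ) = conj (x 2) * x 2
    rw [mul_comm, Complex.mul_conj']
    unfold mfun
    push_cast; ring

lemma Vmap_one_eq (x : E3) : Vmap x 1 = WithLp.toLp 2 ![0, 0, 1] := by
  ext i
  fin_cases i
  · show ((1 - 1 : ℝ) : ℂ) * (((1 - 1 : ℝ) : ℂ) * conj (x 2) * x 0 + ((1 : ℝ) : ℂ) * conj (x 1))
      = 0
    push_cast; ring
  · show ((1 - 1 : ℝ) : ℂ) * (((1 - 1 : ℝ) : ℂ) * conj (x 2) * x 1 - ((1 : ℝ) : ℂ) * conj (x 0))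
      = 0
    push_cast; ring
  · show ((mfun x 1 : ℝ) : ℂ) = 1
    unfold mfun
    push_cast; ring

abbrev Sph := Metric.sphere (0 : E3) 1

lemma sph_ne_zero' (x : Sph) : (x : E3) ≠ 0 := by
  intro h
  have hx := x.2
  rw [mem_sphere_zero_iff_norm, h, norm_zero] at hx
  exact zero_ne_one hx

lemma sph_sum (x : Sph) :
    ‖(x : E3) 0‖ ^ 2 + ‖(x : E3) 1‖ ^ 2 + ‖(x : E3) 2‖ ^ 2 = 1 := by
  have hx : ‖(x : E3)‖ = 1 := mem_sphere_zero_iff_norm.mp x.2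
  have h := EuclideanSpace.norm_eq (x : E3)
  rw [hx] at h
  have hnn : (0:ℝ) ≤ ∑ i, ‖(x : E3) i‖ ^ 2 := Finset.sum_nonneg fun i _ => sq_nonneg _
  have h2 : (∑ i, ‖(x : E3) i‖ ^ 2) = 1 := by
    rw [← Real.sq_sqrt hnn, ← h]; norm_num
  rw [← Fin.sum_univ_three (fun i => ‖(x : E3) i‖ ^ 2)]
  exact h2

def F (p : unitInterval × Sph) : CP2modCP1 :=
  if h : (p.1 : ℝ) = 0 ∧ ((p.2 : E3)) 2 = 0 then basept
  else Q ⟨Vmap p.2 p.1, Vmap_ne_zero _ _ h⟩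

lemma F_zero (x : Sph) : F (0, x) = Q ⟨(x : E3), sph_ne_zero' x⟩ := by
  by_cases h2 : ((x : E3)) 2 = 0
  · rw [F, dif_pos ⟨rfl, h2⟩, Q_eq_basept _ h2]
  · rw [F, dif_neg (by simp [h2])]
    exact Q_smul _ (conj ((x : E3) 2))
      (fun hc => h2 (by simpa using congrArg conj hc)) _ (by
        show Vmap (x : E3) ((0 : unitInterval) : ℝ) = _
        rw [show ((0 : unitInterval) : ℝ) = 0 from rfl, Vmap_zero_eq])

lemma F_one (x : Sph) : F (1, x) = nullpt := by
  rw [F, dif_neg (by simp)]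
  unfold nullpt
  congr 1
  exact Subtype.ext (by show Vmap (x : E3) ((1 : unitInterval) : ℝ) = _
                        rw [show ((1 : unitInterval) : ℝ) = 1 from rfl, Vmap_one_eq])

lemma norm_sq_E3 (v : E3) : ‖v‖ ^ 2 = ‖v 0‖ ^ 2 + ‖v 1‖ ^ 2 + ‖v 2‖ ^ 2 := by
  rw [EuclideanSpace.norm_eq, Real.sq_sqrt (by positivity)]
  exact Fin.sum_univ_three _

def K0 : Set E3 := Metric.sphere 0 1 ∩ {v | v 2 = 0}

lemma close_K0 (N : E3) (hN : ‖N‖ = 1) (hsmall : ‖N 2‖ ≤ 1 / 2) :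
    ∃ k ∈ K0, dist N k ≤ 2 * ‖N 2‖ := by
  set δ := ‖N 2‖ with hδ
  have hδ0 : 0 ≤ δ := norm_nonneg _
  set M : E3 := WithLp.toLp 2 ![N 0, N 1, 0] with hM
  have hM2 : ‖M‖ ^ 2 = 1 - δ ^ 2 := by
    have h1 := norm_sq_E3 M
    have h2 := norm_sq_E3 N
    rw [hN] at h2
    have e0 : M 0 = N 0 := rfl
    have e1 : M 1 = N 1 := rfl
    have e2 : M 2 = 0 := rfl
    rw [e0, e1, e2] at h1
    rw [h1]
    simp only [norm_zero]
    nlinarith [h2]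
  have hMpos : 0 < ‖M‖ := by
    rcases (norm_nonneg M).lt_or_eq with h | h
    · exact h
    · exfalso; rw [← h] at hM2; nlinarith
  have hMle : ‖M‖ ≤ 1 := by nlinarith [norm_nonneg M]
  set r : ℝ := ‖M‖⁻¹ with hr
  set k : E3 := ((r : ℝ) : ℂ) • M with hk
  have hknorm : ‖k‖ = 1 := by
    rw [hk, norm_smul, Complex.norm_real, Real.norm_eq_abs,
      abs_of_nonneg (by positivity : (0:ℝ) ≤ r), hr, inv_mul_cancel₀ (ne_of_gt hMpos)]
  have hk2 : k 2 = 0 := by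
    show ((r : ℝ) : ℂ) * M 2 = 0
    have : M 2 = 0 := rfl
    rw [this, mul_zero]
  refine ⟨k, ⟨mem_sphere_zero_iff_norm.mpr hknorm, hk2⟩, ?_⟩
  have hNM : ‖N - M‖ = δ := by
    have h1 := norm_sq_E3 (N - M)
    have e0 : (N - M) 0 = 0 := by show N 0 - M 0 = 0; rw [show M 0 = N 0 from rfl, sub_self]
    have e1 : (N - M) 1 = 0 := by show N 1 - M 1 = 0; rw [show M 1 = N 1 from rfl, sub_self]
    have e2 : (N - M) 2 = N 2 := by show N 2 - M 2 = N 2; rw [show M 2 = (0:ℂ) from rfl, sub_zero]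
    rw [e0, e1, e2] at h1
    simp only [norm_zero] at h1
    have h2 : ‖N - M‖ ^ 2 = δ ^ 2 := by rw [h1]; ring
    rw [← Real.sqrt_sq (norm_nonneg (N - M)), h2, Real.sqrt_sq hδ0]
  have hMk : ‖M - k‖ ≤ δ ^ 2 := by
    have h1 : M - k = ((1 : ℂ) - ((r : ℝ) : ℂ)) • M := by
      rw [sub_smul, one_smul, hk]
    have h2 : ‖M - k‖ = |1 - r| * ‖M‖ := by
      rw [h1, norm_smul]
      congr 1
      rw [show (1 : ℂ) - ((r : ℝ) : ℂ) = (((1 - r : ℝ)) : ℂ) by push_cast; ring,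
        Complex.norm_real, Real.norm_eq_abs]
    have hr1 : 1 ≤ r := by
      rw [hr]
      exact (one_le_inv₀ hMpos).2 hMle
    have h3 : |1 - r| = r - 1 := by rw [abs_of_nonpos (by linarith)]; ring
    have h4 : (r - 1) * ‖M‖ = 1 - ‖M‖ := by
      rw [sub_mul, hr, inv_mul_cancel₀ (ne_of_gt hMpos), one_mul]
    rw [h2, h3, h4]
    nlinarith
  have htri : dist N k ≤ ‖N - M‖ + ‖M - k‖ := by
    rw [dist_eq_norm]
    exact norm_sub_le_norm_sub_add_norm_sub N M k
  have : ‖N - M‖ + ‖M - k‖ ≤ 2 * δ := by rw [hNM]; nlinarith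
  linarith

lemma isClosed_bad :
    IsClosed {p : unitInterval × Sph | (p.1 : ℝ) = 0 ∧ ((p.2 : E3)) 2 = 0} := by
  rw [Set.setOf_and]
  exact (isClosed_eq (continuous_subtype_val.comp continuous_fst) continuous_const).inter
    (isClosed_eq ((PiLp.continuous_apply (p := 2) (β := fun _ : Fin 3 => ℂ) 2).comp (continuous_subtype_val.comp continuous_snd))
      continuous_const)

lemma continuousOn_F :
    ContinuousOn F {p : unitInterval × Sph | ¬((p.1 : ℝ) = 0 ∧ ((p.2 : E3)) 2 = 0)} := by
  rw [continuousOn_iff_continuous_restrict]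
  have heq : {p : unitInterval × Sph | ¬((p.1 : ℝ) = 0 ∧ ((p.2 : E3)) 2 = 0)}.domRestrict F
      = fun q : {p : unitInterval × Sph // ¬((p.1 : ℝ) = 0 ∧ ((p.2 : E3)) 2 = 0)} =>
        Q ⟨Vmap q.1.2 q.1.1, Vmap_ne_zero _ _ q.2⟩ := by
    funext q
    exact dif_neg q.2
  rw [heq]
  apply continuous_Q.comp
  apply Continuous.subtype_mk
  exact continuous_Vmap.comp
    ((continuous_subtype_val.comp (continuous_snd.comp continuous_subtype_val)).prodMk
      (continuous_subtype_val.comp (continuous_fst.comp continuous_subtype_val)))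

set_option maxHeartbeats 2000000 in
lemma continuous_F : Continuous F := by
  rw [continuous_iff_continuousAt]
  intro p
  by_cases hp : (p.1 : ℝ) = 0 ∧ ((p.2 : E3)) 2 = 0
  case neg =>
    exact continuousOn_F.continuousAt (isClosed_bad.isOpen_compl.mem_nhds hp)
  case pos =>
    have hFp : F p = basept := dif_pos hp
    unfold ContinuousAt
    rw [hFp, Filter.tendsto_def]
    intro W hW
    rcases mem_nhds_iff.mp hW with ⟨W', hW'W, hW'open, hbW'⟩
    have hQW' : IsOpen (Q ⁻¹' W') := hW'open.preimage continuous_Q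
    rcases ((Topology.IsInducing.subtypeVal (t := {v : E3 | v ≠ 0})).isOpen_iff).mp hQW' with ⟨U2, hU2open, hpre⟩
    have hK0c : IsCompact K0 := (isCompact_sphere 0 1).inter_right
      (isClosed_eq (PiLp.continuous_apply (p := 2) (β := fun _ : Fin 3 => ℂ) (2 : Fin 3) : Continuous fun v : E3 => v 2)
        continuous_const)
    have hK0sub : K0 ⊆ U2 := by
      rintro v ⟨hv1, hv2⟩
      have hvne : v ≠ 0 := by
        intro h0
        rw [mem_sphere_zero_iff_norm, h0, norm_zero] at hv1
        exact zero_ne_one hv1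
      have hmem : (⟨v, hvne⟩ : {v : E3 // v ≠ 0}) ∈ Q ⁻¹' W' := by
        show Q ⟨v, hvne⟩ ∈ W'
        rw [Q_eq_basept _ (show v 2 = 0 from hv2)]
        exact hbW'
      rw [← hpre] at hmem
      exact hmem
    obtain ⟨ρ, hρ0, hthick⟩ := hK0c.exists_thickening_subset_open hU2open hK0sub
    set ε : ℝ := min (1/12) (ρ/9) with hε
    have hε0 : 0 < ε := lt_min (by norm_num) (by positivity)
    have hε12 : ε ≤ 1/12 := min_le_left _ _
    have hερ : ε ≤ ρ/9 := min_le_right _ _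
    have hUopen : IsOpen {q : unitInterval × Sph | (q.1 : ℝ) < ε ∧ ‖((q.2 : E3)) 2‖ < ε} := by
      rw [Set.setOf_and]
      exact (isOpen_lt (continuous_subtype_val.comp continuous_fst) continuous_const).inter
        (isOpen_lt (continuous_norm.comp
          ((PiLp.continuous_apply (p := 2) (β := fun _ : Fin 3 => ℂ) 2).comp (continuous_subtype_val.comp continuous_snd)))
          continuous_const)
    have hpU : p ∈ {q : unitInterval × Sph | (q.1 : ℝ) < ε ∧ ‖((q.2 : E3)) 2‖ < ε} := by
      constructor
      · rw [hp.1]; exact hε0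
      · rw [hp.2, norm_zero]; exact hε0
    apply Filter.mem_of_superset (hUopen.mem_nhds hpU)
    rintro ⟨t, x⟩ ⟨hqt, hqx⟩
    show F (t, x) ∈ W
    by_cases hq : ((t : ℝ) = 0 ∧ ((x : E3)) 2 = 0)
    · rw [show F (t, x) = basept from dif_pos hq]
      exact hW'W hbW'
    · set tv : ℝ := (t : ℝ) with htv
      set xv : E3 := (x : E3) with hxv
      clear_value tv xv
      have hm_pos : 0 < mfun xv tv := mfun_pos _ _ hq
      have ht0 : 0 ≤ tv := by rw [htv]; exact t.2.1
      have ht1 : tv ≤ 1 := by rw [htv]; exact t.2.2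
      have hsum : ‖xv 0‖ ^ 2 + ‖xv 1‖ ^ 2 + ‖xv 2‖ ^ 2 = 1 := by rw [hxv]; exact sph_sum x
      have hx2nn : 0 ≤ ‖xv 2‖ := norm_nonneg _
      have hx2e : ‖xv 2‖ ^ 2 ≤ ε ^ 2 := by nlinarith
      have ht2e : tv ^ 2 ≤ ε ^ 2 := by nlinarith
      have h1tle : (1 - tv) ^ 2 ≤ 1 := by nlinarith
      have hm_le : mfun xv tv ≤ 2 * ε ^ 2 := by
        unfold mfun
        nlinarith [mul_le_mul h1tle hx2e (sq_nonneg ‖xv 2‖) zero_le_one]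
      have h1t : (1:ℝ)/2 ≤ 1 - tv := by linarith [lt_of_lt_of_le hqt hε12]
      have hS : (1:ℝ)/2 ≤ ‖xv 0‖ ^ 2 + ‖xv 1‖ ^ 2 := by nlinarith
      set n : ℝ := ‖Vmap xv tv‖ with hn
      clear_value n
      have hn_pos : 0 < n := by
        rw [hn]; exact norm_pos_iff.mpr (Vmap_ne_zero _ _ hq)
      have hn_sq : n ^ 2 = (1 - tv) ^ 2 * mfun xv tv * (‖xv 0‖ ^ 2 + ‖xv 1‖ ^ 2)
          + mfun xv tv ^ 2 := by rw [hn]; exact norm_Vmap_sq xv tv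
      have h18 : (1:ℝ)/8 ≤ (1 - tv) ^ 2 * (‖xv 0‖ ^ 2 + ‖xv 1‖ ^ 2) := by
        have h5 : (1:ℝ)/4 ≤ (1 - tv) ^ 2 := by nlinarith
        nlinarith [mul_le_mul h5 hS (by norm_num : (0:ℝ) ≤ 1/2) (sq_nonneg (1 - tv))]
      have hn_lb : mfun xv tv / 8 ≤ n ^ 2 := by
        rw [hn_sq]
        nlinarith [mul_le_mul_of_nonneg_right h18 hm_pos.le, sq_nonneg (mfun xv tv)]
      set N : E3 := ((n⁻¹ : ℝ) : ℂ) • Vmap xv tv with hN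
      clear_value N
      have hNnorm : ‖N‖ = 1 := by
        rw [hN, norm_smul, Complex.norm_real, Real.norm_eq_abs,
          abs_of_nonneg (inv_nonneg.mpr hn_pos.le), ← hn, inv_mul_cancel₀ (ne_of_gt hn_pos)]
      have hN2 : ‖N 2‖ = n⁻¹ * mfun xv tv := by
        have e1 : N 2 = ((n⁻¹ : ℝ) : ℂ) * Vmap xv tv 2 := by rw [hN]; rfl
        rw [e1, Vmap_apply2, norm_mul, Complex.norm_real, Complex.norm_real,
          Real.norm_eq_abs, Real.norm_eq_abs, abs_of_nonneg (inv_nonneg.mpr hn_pos.le),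
          abs_of_nonneg (mfun_nonneg xv tv)]
      have hδsq : ‖N 2‖ ^ 2 ≤ 8 * mfun xv tv := by
        have d1 : ‖N 2‖ ^ 2 * n ^ 2 = mfun xv tv ^ 2 := by
          rw [hN2]
          field_simp
        nlinarith [mul_le_mul_of_nonneg_left hn_lb (sq_nonneg ‖N 2‖), hm_pos]
      have hδ4 : ‖N 2‖ ≤ 4 * ε := by
        nlinarith [norm_nonneg (N 2), sq_nonneg (‖N 2‖ - 4 * ε), sq_nonneg (‖N 2‖ + 4 * ε)]
      have hδhalf : ‖N 2‖ ≤ 1 / 2 := by linarith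
      obtain ⟨k, hkK, hkdist⟩ := close_K0 N hNnorm hδhalf
      have hNthick : N ∈ Metric.thickening ρ K0 := by
        rw [Metric.mem_thickening_iff]
        exact ⟨k, hkK, by nlinarith⟩
      have hNU2 : N ∈ U2 := hthick hNthick
      have hNne : N ≠ 0 := by
        rw [hN]
        exact smul_ne_zero (Complex.ofReal_ne_zero.mpr (inv_ne_zero (ne_of_gt hn_pos)))
          (Vmap_ne_zero _ _ hq)
      have hQN : Q ⟨N, hNne⟩ ∈ W' := by
        have hmem2 : (⟨N, hNne⟩ : {v : E3 // v ≠ 0}) ∈ Q ⁻¹' W' := by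
          rw [← hpre]
          exact hNU2
        exact hmem2
      have hFQ : F (t, x) = Q ⟨N, hNne⟩ := by
        have hcond : ¬(((t : ℝ)) = 0 ∧ ((x : E3)) 2 = 0) := by
          rw [← htv, ← hxv]; exact hq
        have e2 : F (t, x) = Q ⟨Vmap (x : E3) (t : ℝ), Vmap_ne_zero _ _ hcond⟩ :=
          dif_neg hcond
        have e3 : Q ⟨Vmap (x : E3) (t : ℝ), Vmap_ne_zero _ _ hcond⟩
            = Q ⟨Vmap xv tv, Vmap_ne_zero _ _ hq⟩ :=
          congrArg Q (Subtype.ext (show Vmap (x : E3) (t : ℝ) = Vmap xv tv by rw [hxv, htv]))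
        rw [e2, e3]
        exact (Q_smul ⟨Vmap xv tv, Vmap_ne_zero _ _ hq⟩ ((n⁻¹ : ℝ) : ℂ)
          (Complex.ofReal_ne_zero.mpr (inv_ne_zero (ne_of_gt hn_pos))) ⟨N, hNne⟩ hN).symm
      rw [hFQ]
      exact hW'W hQN


/-- The composite `q ∘ π : S⁵ → ℂP²/ℂP¹` of the Hopf map with the map collapsing `ℂP¹` to a
point is null-homotopic. -/
theorem collapse_comp_hopf_nullhomotopic :
    (collapseMap.comp hopf).Nullhomotopic := by
  refine ⟨nullpt, ⟨?_⟩⟩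
  exact
    { toFun := F
      continuous_toFun := continuous_F
      map_zero_left := fun x => F_zero x
      map_one_left := fun x => F_one x }
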